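/- Let κ be a regular uncountable cardinal and ⟨λ_j : j < κ⟩ a strictly increasing sequence of infinite cardinals, and let the levels 𝒯_i (i < κ) of the tree 𝒯 be defined as in the context. Then for all i < j < κ and every η ∈ 𝒯_i there exists ν ∈ 𝒯_j such that ν ↾ (i+1) = η; in particular every level 𝒯_i is nonempty and every node of 𝒯 has extensions at every higher level below κ. -/

import Mathlib

open Cardinal

/-- `η` (a function recording the pairs `η(j) = (η(j,1), η(j,2))` for `j ≤ i`; values
beyond `i` are irrelevant) is a node of the `i`-th level `𝒯_i` of the tree `𝒯`:
(c) `η(j,1) < λ_j` and `η(j,2) < κ` for `j ≤ i`;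
(d) both coordinates are nondecreasing on `j ≤ i`;
(e) `η` has finitely many values on `j ≤ i`;
(f) if `j₁ < j₂ ≤ i` and the first coordinate is constant on `[j₁, j₂]`, then
    `j₂ < η(j₁,2)`. -/
def InLevel (lam : Ordinal → Ordinal) (κ i : Ordinal)
    (η : Ordinal → Ordinal × Ordinal) : Prop :=
  (∀ j ≤ i, (η j).1 < lam j ∧ (η j).2 < κ) ∧
  (∀ j₁ j₂ : Ordinal, j₁ < j₂ → j₂ ≤ i → (η j₁).1 ≤ (η j₂).1 ∧ (η j₁).2 ≤ (η j₂).2) ∧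
  (η '' Set.Iic i).Finite ∧
  (∀ j₁ j₂ : Ordinal, j₁ < j₂ → j₂ ≤ i →
    (∀ j, j₁ ≤ j → j ≤ j₂ → (η j).1 = (η j₁).1) → j₂ < (η j₁).2)

/-- **Every node of `𝒯` extends to every higher level, and all levels are nonempty:**
for a regular uncountable cardinal `κ` and a strictly increasing sequence
`⟨λ_j : j < κ⟩` of infinite cardinals, every level `𝒯_i` (`i < κ`) is nonempty, and for
all `i < j < κ` and `η ∈ 𝒯_i` there is `ν ∈ 𝒯_j` with `ν ↾ (i+1) = η`. -/
theorem stmt7 (κ : Cardinal) (hκreg : κ.IsRegular) (hκunc : ℵ₀ < κ)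
    (lam : Ordinal → Cardinal)
    (hmono : StrictMonoOn lam (Set.Iio κ.ord))
    (hinf : ∀ j < κ.ord, ℵ₀ ≤ lam j) :
    (∀ i < κ.ord, ∃ η, InLevel (fun j => (lam j).ord) κ.ord i η) ∧
    (∀ i j : Ordinal, i < j → j < κ.ord →
      ∀ η, InLevel (fun k => (lam k).ord) κ.ord i η →
        ∃ ν, InLevel (fun k => (lam k).ord) κ.ord j ν ∧ ∀ k ≤ i, ν k = η k) := by
  have hκlim : Order.IsSuccLimit κ.ord := Cardinal.isSuccLimit_ord hκreg.aleph0_le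
  constructor
  · intro i hi
    refine ⟨fun _ => (0, i + 1), ?_, ?_, ?_, ?_⟩
    · intro j hj
      constructor
      · have h0 : ℵ₀ ≤ lam j := hinf j (lt_of_le_of_lt hj hi)
        calc (0 : Ordinal) < Cardinal.aleph0.ord := by
              rw [Cardinal.ord_aleph0]; exact Ordinal.omega0_pos
          _ ≤ (lam j).ord := Cardinal.ord_le_ord.mpr h0
      · rw [Ordinal.add_one_eq_succ]
        exact hκlim.succ_lt hi
    · intro j₁ j₂ _ _; exact ⟨le_rfl, le_rfl⟩
    · exact Set.Finite.subset (Set.finite_singleton ((0 : Ordinal), i + 1))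
        (by rintro x ⟨y, _, rfl⟩; simp)
    · intro j₁ j₂ h12 h2i _
      exact lt_of_le_of_lt h2i (by rw [Ordinal.add_one_eq_succ]; exact Order.lt_succ i)
  · intro i j hij hj η hη
    obtain ⟨hc, hd, he, hf⟩ := hη
    have hiκ : i < κ.ord := hij.trans hj
    have hdle : ∀ k₁ k₂, k₁ ≤ k₂ → k₂ ≤ i → (η k₁).1 ≤ (η k₂).1 ∧ (η k₁).2 ≤ (η k₂).2 := by
      intro k₁ k₂ h hk
      rcases eq_or_lt_of_le h with rfl | h
      · exact ⟨le_rfl, le_rfl⟩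
      · exact hd k₁ k₂ h hk
    set ν : Ordinal → Ordinal × Ordinal :=
      fun k => if k ≤ i then η k else ((η i).1 + 1, max (η i).2 (j + 1)) with hν
    refine ⟨ν, ⟨?_, ?_, ?_, ?_⟩, ?_⟩
    · intro k hk
      by_cases hki : k ≤ i
      · simpa [hν, hki] using hc k hki
      · push_neg at hki
        simp only [hν, not_le.mpr hki, if_neg (not_le.mpr hki)]
        constructor
        · have h1 : (η i).1 < (lam i).ord := (hc i le_rfl).1
          have h2 : (lam i).ord ≤ (lam k).ord :=
            Cardinal.ord_le_ord.mpr (hmono hiκ (lt_of_le_of_lt hk hj) hki).le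
          have hlim : Order.IsSuccLimit ((lam k).ord) :=
            Cardinal.isSuccLimit_ord (hinf k (lt_of_le_of_lt hk hj))
          rw [Ordinal.add_one_eq_succ]
          exact hlim.succ_lt (lt_of_lt_of_le h1 h2)
        · apply max_lt (hc i le_rfl).2
          rw [Ordinal.add_one_eq_succ]
          exact hκlim.succ_lt hj
    · intro k₁ k₂ h12 h2j
      by_cases h2i : k₂ ≤ i
      · have h1i : k₁ ≤ i := (h12.le.trans h2i)
        simpa [hν, h1i, h2i] using hd k₁ k₂ h12 h2i
      · by_cases h1i : k₁ ≤ i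
        · simp only [hν, if_pos h1i, if_neg h2i]
          obtain ⟨ha, hb⟩ := hdle k₁ i h1i le_rfl
          exact ⟨ha.trans le_self_add, hb.trans (le_max_left _ _)⟩
        · simp [hν, h1i, h2i]
    · have : ν '' Set.Iic j ⊆ (η '' Set.Iic i) ∪ {((η i).1 + 1, max (η i).2 (j + 1))} := by
        rintro x ⟨k, hk, rfl⟩
        by_cases hki : k ≤ i
        · left; exact ⟨k, hki, by simp [hν, hki]⟩
        · right; simp [hν, hki]
      exact Set.Finite.subset (he.union (Set.finite_singleton _)) this
    · intro j₁ j₂ h12 h2j hconst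
      by_cases h2i : j₂ ≤ i
      · have h1i : j₁ ≤ i := h12.le.trans h2i
        have : ∀ k, j₁ ≤ k → k ≤ j₂ → (η k).1 = (η j₁).1 := by
          intro k hk1 hk2
          have := hconst k hk1 hk2
          simpa [hν, hk2.trans h2i, h1i] using this
        have := hf j₁ j₂ h12 h2i this
        simpa [hν, h1i] using this
      · push_neg at h2i
        by_cases h1i : j₁ ≤ i
        · exfalso
          have h1 := hconst j₂ h12.le le_rfl
          simp only [hν, if_neg (not_le.mpr h2i), if_pos h1i] at h1
          have h2 : (η j₁).1 ≤ (η i).1 := (hdle j₁ i h1i le_rfl).1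
          have : (η i).1 + 1 ≤ (η i).1 := h1.le.trans h2
          exact absurd this (by rw [Ordinal.add_one_eq_succ]; exact not_le.mpr (Order.lt_succ _))
        · simp only [hν, if_neg h1i]
          calc j₂ ≤ j := h2j
            _ < j + 1 := by rw [Ordinal.add_one_eq_succ]; exact Order.lt_succ j
            _ ≤ max (η i).2 (j + 1) := le_max_right _ _
    · intro k hk; simp [hν, hk]
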